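/- Let w(ξ) be an invertible element of total degree 0 leading term 1 in a graded ℤ/2-algebra, interpreted as a total Stiefel-Whitney class, and let w̄ = w^{-1}. In ℤ/2[α] with deg α = 1, for w = (1+α)^{r+1} with r ≡ 2^a (mod 2^{a+1}), all homogeneous components of w̄ = (1+α)^{-(r+1)} in degrees d with 2^a ≤ d < 2^{a+1} vanish. -/

import Mathlib

open PowerSeries

instance : CharP (PowerSeries (ZMod 2)) 2 :=
  charP_of_injective_ringHom (PowerSeries.C_injective) 2

lemma aux_coeff_pow (m k i : ℕ) (h0 : 0 < i) (him : i < m) :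
    PowerSeries.coeff (R := ZMod 2) i ((1 + PowerSeries.X ^ m) ^ k) = 0 := by
  induction k with
  | zero => simp [PowerSeries.coeff_one, h0.ne']
  | succ k ih =>
    rw [pow_succ, PowerSeries.coeff_mul]
    apply Finset.sum_eq_zero
    rintro ⟨p, s⟩ hps
    rw [Finset.HasAntidiagonal.mem_antidiagonal] at hps
    rcases eq_or_ne s 0 with hs | hs
    · have hpi : p = i := by omega
      subst hpi
      rw [ih, zero_mul]
    · have : PowerSeries.coeff (R := ZMod 2) s (1 + PowerSeries.X ^ m) = 0 := by
        rw [map_add, PowerSeries.coeff_one, PowerSeries.coeff_X_pow]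
        have hsm : s ≠ m := by omega
        simp [hs, hsm]
      simp only at this ⊢
      rw [this, mul_zero]

lemma aux_coeff_inv (m : ℕ) (f : PowerSeries (ZMod 2))
    (hc : PowerSeries.constantCoeff (R := ZMod 2) f = 1)
    (hf : ∀ i, 0 < i → i < m → PowerSeries.coeff (R := ZMod 2) i f = 0)
    (j : ℕ) (h0 : 0 < j) (hjm : j < m) :
    PowerSeries.coeff (R := ZMod 2) j f⁻¹ = 0 := by
  have hone : f * f⁻¹ = 1 := PowerSeries.mul_inv_cancel f (by rw [hc]; exact one_ne_zero)
  have := congrArg (PowerSeries.coeff (R := ZMod 2) j) hone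
  rw [PowerSeries.coeff_mul, PowerSeries.coeff_one, if_neg h0.ne'] at this
  rw [Finset.sum_eq_single (0, j)] at this
  · rwa [PowerSeries.coeff_zero_eq_constantCoeff, hc, one_mul] at this
  · rintro ⟨p, s⟩ hps hne
    rw [Finset.HasAntidiagonal.mem_antidiagonal] at hps
    have hp : 0 < p := by
      rcases Nat.eq_zero_or_pos p with h | h
      · exact absurd (by simp [h, ← hps, Prod.ext_iff]) hne
      · exact h
    simp only at hps ⊢
    rw [hf p hp (by omega), zero_mul]
  · intro h
    exact absurd (Finset.HasAntidiagonal.mem_antidiagonal.mpr (by simp)) h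

/-- In `ℤ/2[[α]]`, for `w = (1+α)^{r+1}` with `r ≡ 2^a (mod 2^{a+1})`,
all coefficients of `w̄ = (1+α)^{-(r+1)}` in degrees `d` with `2^a ≤ d < 2^{a+1}`
vanish. -/
theorem stmt9 (r a : ℕ) (hr : r % 2 ^ (a + 1) = 2 ^ a)
    (d : ℕ) (h1 : 2 ^ a ≤ d) (h2 : d < 2 ^ (a + 1)) :
    PowerSeries.coeff (R := ZMod 2) d
      (((1 + PowerSeries.X : PowerSeries (ZMod 2)) ^ (r + 1))⁻¹) = 0 := by
  set m := 2 ^ (a + 1) with hm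
  set q := r / m with hq
  have hrq : r = m * q + 2 ^ a := by
    rw [hq, ← hr]
    exact (Nat.div_add_mod r m).symm
  have hpa : 0 < 2 ^ a := Nat.pow_pos (n := a) (by norm_num)
  have hm2 : m = 2 * 2 ^ a := by rw [hm, pow_succ, mul_comm]
  set f : PowerSeries (ZMod 2) := (1 + PowerSeries.X ^ m) ^ (q + 1) with hfdef
  have hfreeze : (1 + PowerSeries.X : PowerSeries (ZMod 2)) ^ m
      = 1 + PowerSeries.X ^ m := by
    have := add_pow_char_pow (R := PowerSeries (ZMod 2)) (p := 2)
      (x := (1 : PowerSeries (ZMod 2))) (y := PowerSeries.X) (n := a + 1)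
    simpa using this
  have key : (1 + PowerSeries.X : PowerSeries (ZMod 2)) ^ (r + 1)
      * (1 + PowerSeries.X) ^ (2 ^ a - 1) = f := by
    rw [← pow_add, hfdef, ← hfreeze, ← pow_mul]
    congr 1
    rw [Nat.mul_add, mul_one]
    omega
  have hcf : PowerSeries.constantCoeff (R := ZMod 2) f = 1 := by
    have hm0 : 0 < m := Nat.pow_pos (n := a + 1) (by norm_num)
    simp [hfdef, zero_pow hm0.ne']
  have hfi : ∀ i, 0 < i → i < m → PowerSeries.coeff (R := ZMod 2) i f = 0 := fun i h0 hi =>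
    aux_coeff_pow m (q + 1) i h0 hi
  have hfinv : f * f⁻¹ = 1 := PowerSeries.mul_inv_cancel f (by rw [hcf]; exact one_ne_zero)
  have hinv : ((1 + PowerSeries.X : PowerSeries (ZMod 2)) ^ (r + 1))⁻¹
      = (1 + PowerSeries.X) ^ (2 ^ a - 1) * f⁻¹ := by
    symm
    rw [PowerSeries.eq_inv_iff_mul_eq_one (by simp)]
    rw [mul_comm, ← mul_assoc, key, hfinv]
  rw [hinv, PowerSeries.coeff_mul]
  apply Finset.sum_eq_zero
  rintro ⟨p, s⟩ hps
  rw [Finset.HasAntidiagonal.mem_antidiagonal] at hps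
  simp only at hps ⊢
  rcases Nat.eq_zero_or_pos s with hs | hs
  · subst hs
    have hpd : p = d := by omega
    subst hpd
    have hcoe : ((1 + PowerSeries.X : PowerSeries (ZMod 2)) ^ (2 ^ a - 1))
        = ((((1 + Polynomial.X : Polynomial (ZMod 2))) ^ (2 ^ a - 1) : Polynomial (ZMod 2)) :
          PowerSeries (ZMod 2)) := by
      rw [Polynomial.coe_pow, Polynomial.coe_add, Polynomial.coe_one, Polynomial.coe_X]
    rw [hcoe, Polynomial.coeff_coe, Polynomial.coeff_one_add_X_pow,
      Nat.choose_eq_zero_of_lt (by omega)]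
    simp
  · rw [aux_coeff_inv m f hcf hfi s hs (by omega), mul_zero]
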